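/- Let M = (M_1, ..., M_N) be a rank-1 POVM on ℂ^d with M_i = |d_i⟩⟨d_i|, d_i ≠ 0. Then M is an extreme point of the convex set of N-outcome POVMs on ℂ^d if and only if the matrices |d_i⟩⟨d_i|, i = 1,...,N, are linearly independent in the space of d×d matrices. -/

import Mathlib

open Matrix
open scoped ComplexOrder

lemma herm_vmv {d : ℕ} (v : Fin d → ℂ) : (vecMulVec v (star v)).IsHermitian := by
  ext j k
  simp [conjTranspose_apply, vecMulVec_apply, mul_comm]

lemma vmv_mulVec {d : ℕ} (v x : Fin d → ℂ) :
    vecMulVec v (star v) *ᵥ x = (star v ⬝ᵥ x) • v := by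
  ext j
  simp [vecMulVec_apply, mulVec, dotProduct, Finset.sum_mul, Finset.mul_sum]
  exact Finset.sum_congr rfl fun k _ => by ring

lemma key {d : ℕ} (v : Fin d → ℂ) (hv : v ≠ 0)
    (A B : Matrix (Fin d) (Fin d) ℂ) (hA : A.PosSemidef) (hB : B.PosSemidef)
    (hAB : A + B = (2 : ℂ) • vecMulVec v (star v)) :
    ∃ t : ℂ, A = t • vecMulVec v (star v) := by
  have hn : (star v ⬝ᵥ v) ≠ 0 := fun h => hv (dotProduct_star_self_eq_zero.mp h)
  -- vectors orthogonal to v are in the kernel of A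
  have hker : ∀ w, star v ⬝ᵥ w = 0 → A *ᵥ w = 0 := by
    intro w hw
    rw [← hA.dotProduct_mulVec_zero_iff]
    have h1 : (0:ℂ) ≤ star w ⬝ᵥ A *ᵥ w := hA.dotProduct_mulVec_nonneg w
    have h2 : (0:ℂ) ≤ star w ⬝ᵥ B *ᵥ w := hB.dotProduct_mulVec_nonneg w
    have h3 : star w ⬝ᵥ A *ᵥ w + star w ⬝ᵥ B *ᵥ w = 0 := by
      rw [← dotProduct_add, ← add_mulVec, hAB, smul_mulVec, vmv_mulVec, hw]
      simp
    exact ((add_eq_zero_iff_of_nonneg h1 h2).mp h3).1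
  set n := star v ⬝ᵥ v with hn'
  set β := (star v ⬝ᵥ (A *ᵥ v)) / n with hβ
  have hAv : A *ᵥ v = β • v := by
    set u := A *ᵥ v - β • v with hu
    have hvu : star v ⬝ᵥ u = 0 := by
      rw [hu, dotProduct_sub, dotProduct_smul, smul_eq_mul, hβ]
      field_simp
      rw [← hn']; ring
    have hAu : A *ᵥ u = 0 := hker u hvu
    have huAv : star u ⬝ᵥ (A *ᵥ v) = 0 := by
      rw [dotProduct_mulVec, ← hA.1, ← star_mulVec, hAu]
      simp
    have huv : star u ⬝ᵥ v = 0 := by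
      rw [star_dotProduct, hvu, star_zero]
    have huu : star u ⬝ᵥ u = 0 := by
      have e : star u ⬝ᵥ u = star u ⬝ᵥ (A *ᵥ v) - star u ⬝ᵥ (β • v) := by
        nth_rewrite 2 [hu]
        rw [dotProduct_sub]
      rw [e, huAv, dotProduct_smul, huv, smul_eq_mul, mul_zero, sub_zero]
    have : u = 0 := dotProduct_star_self_eq_zero.mp huu
    have := sub_eq_zero.mp (hu ▸ this)
    linear_combination (norm := module) this
  refine ⟨β / n, ?_⟩
  have hx : ∀ x : Fin d → ℂ, A *ᵥ x = ((β / n) • vecMulVec v (star v)) *ᵥ x := by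
    intro x
    have hw : star v ⬝ᵥ (x - ((star v ⬝ᵥ x)/n) • v) = 0 := by
      rw [dotProduct_sub, dotProduct_smul, smul_eq_mul, ← hn']
      field_simp
      simp
    have h0 : A *ᵥ (x - ((star v ⬝ᵥ x)/n) • v) = 0 := hker _ hw
    rw [mulVec_sub, mulVec_smul, sub_eq_zero] at h0
    rw [h0, hAv, smul_mulVec, vmv_mulVec, smul_smul, smul_smul]
    congr 1
    field_simp
  ext j k
  have h := congrFun (hx (Pi.single k 1)) j
  simpa [mulVec_single] using h

lemma psd_vmv {d : ℕ} (v : Fin d → ℂ) : (vecMulVec v (star v)).PosSemidef := by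
  refine PosSemidef.of_dotProduct_mulVec_nonneg (herm_vmv v) fun x => ?_
  rw [vmv_mulVec, dotProduct_smul, smul_eq_mul, star_dotProduct]
  exact star_mul_self_nonneg _

lemma psd_smul_real {d : ℕ} {A : Matrix (Fin d) (Fin d) ℂ} (hA : A.PosSemidef)
    {r : ℝ} (hr : 0 ≤ r) : ((r : ℂ) • A).PosSemidef := by
  refine PosSemidef.of_dotProduct_mulVec_nonneg ?_ ?_
  · rw [Matrix.IsHermitian, conjTranspose_smul, hA.1]
    simp
  · intro x
    rw [smul_mulVec, dotProduct_smul, smul_eq_mul]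
    exact mul_nonneg (by exact_mod_cast hr) (hA.dotProduct_mulVec_nonneg x)


lemma vmv_ne_zero {d : ℕ} {v : Fin d → ℂ} (hv : v ≠ 0) : vecMulVec v (star v) ≠ 0 := by
  obtain ⟨j, hj⟩ := Function.ne_iff.mp hv
  intro h
  apply hj
  have h2 := congrFun (congrFun h j) j
  simp only [vecMulVec_apply, Pi.star_apply, Matrix.zero_apply, mul_eq_zero] at h2
  rcases h2 with h2 | h2
  · exact h2
  · simpa using h2

/-- A rank-1 POVM is extreme iff its effects are linearly independent. -/
theorem rank1_extreme_iff_linearIndependent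
    (d N : ℕ)
    (v : Fin N → Fin d → ℂ) (hv : ∀ i, v i ≠ 0)
    (M : Fin N → Matrix (Fin d) (Fin d) ℂ)
    (hrank1 : ∀ i, M i = vecMulVec (v i) (star (v i)))
    (hMsum : ∑ i, M i = 1) :
    (∀ M' M'' : Fin N → Matrix (Fin d) (Fin d) ℂ,
        (∀ i, (M' i).PosSemidef) → ∑ i, M' i = 1 →
        (∀ i, (M'' i).PosSemidef) → ∑ i, M'' i = 1 →
        M = (1/2 : ℂ) • M' + (1/2 : ℂ) • M'' → M' = M ∧ M'' = M)
      ↔ LinearIndependent ℂ M := by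
  have hMpsd : ∀ i, (M i).PosSemidef := fun i => by rw [hrank1 i]; exact psd_vmv (v i)
  have hMne : ∀ i, M i ≠ 0 := fun i => by rw [hrank1 i]; exact vmv_ne_zero (hv i)
  constructor
  · -- extreme → linearly independent
    intro H
    by_contra hLI
    obtain ⟨g, hg, i0, hgi0⟩ := Fintype.not_linearIndependent_iff.mp hLI
    have hMH : ∀ i, (M i)ᴴ = M i := fun i => by rw [hrank1 i]; exact herm_vmv (v i)
    have hg' : ∑ i, (starRingEnd ℂ) (g i) • M i = 0 := by
      have h := congrArg Matrix.conjTranspose hg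
      rw [Matrix.conjTranspose_sum] at h
      simp only [conjTranspose_smul, conjTranspose_zero] at h
      rw [← h]
      exact Finset.sum_congr rfl fun i _ => by rw [hMH i]; rfl
    -- extract a real linear relation
    obtain ⟨t, htrel, ht0⟩ :
        ∃ t : Fin N → ℝ, (∑ i, ((t i : ℝ) : ℂ) • M i = 0) ∧ t i0 ≠ 0 := by
      by_cases hre : (g i0).re ≠ 0
      · refine ⟨fun i => (g i).re, ?_, hre⟩
        have h2 : ∑ i, (g i + (starRingEnd ℂ) (g i)) • M i = 0 := by
          simp only [add_smul, Finset.sum_add_distrib, hg, hg', add_zero]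
        have h3 : ∑ i, ((2:ℂ) * (((g i).re : ℝ) : ℂ)) • M i = 0 := by
          rw [← h2]
          refine Finset.sum_congr rfl fun i _ => ?_
          congr 1
          rw [Complex.add_conj]
          push_cast
          ring
        simp only [mul_smul, ← Finset.smul_sum] at h3
        exact (smul_eq_zero.mp h3).resolve_left (by norm_num)
      · push_neg at hre
        have him : (g i0).im ≠ 0 := fun h =>
          hgi0 (Complex.ext (by simpa using hre) (by simpa using h))
        refine ⟨fun i => (g i).im, ?_, him⟩
        have h2 : ∑ i, (g i - (starRingEnd ℂ) (g i)) • M i = 0 := by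
          simp only [sub_smul, Finset.sum_sub_distrib, hg, hg', sub_zero]
        have h3 : ∑ i, (((2:ℂ) * Complex.I) * (((g i).im : ℝ) : ℂ)) • M i = 0 := by
          rw [← h2]
          refine Finset.sum_congr rfl fun i _ => ?_
          congr 1
          rw [Complex.sub_conj]
          push_cast
          ring
        simp only [mul_smul, ← Finset.smul_sum] at h3
        rcases smul_eq_zero.mp h3 with h | h
        · exact absurd h two_ne_zero
        rcases smul_eq_zero.mp h with h | h
        · exact absurd h Complex.I_ne_zero
        · exact h
    -- normalize the relation
    set T : ℝ := ∑ i, |t i| with hT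
    have hTpos : 0 < T := by
      have h1 : |t i0| ≤ T :=
        Finset.single_le_sum (fun i _ => abs_nonneg (t i)) (Finset.mem_univ i0)
      exact lt_of_lt_of_le (abs_pos.mpr ht0) h1
    set s : Fin N → ℝ := fun i => t i / T with hs
    have hsle : ∀ i, |s i| ≤ 1 := by
      intro i
      rw [hs, abs_div, abs_of_pos hTpos, div_le_one hTpos]
      exact Finset.single_le_sum (fun i _ => abs_nonneg (t i)) (Finset.mem_univ i)
    have hsum0 : ∑ i, ((s i : ℝ) : ℂ) • M i = 0 := by
      have e : ∀ i, ((s i : ℝ) : ℂ) • M i = ((T⁻¹ : ℝ) : ℂ) • (((t i : ℝ) : ℂ) • M i) := by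
        intro i
        rw [smul_smul]
        congr 1
        rw [hs]
        push_cast
        ring
      simp only [e, ← Finset.smul_sum, htrel, smul_zero]
    obtain ⟨h1', h2'⟩ := H (fun i => ((1 + s i : ℝ) : ℂ) • M i)
        (fun i => ((1 - s i : ℝ) : ℂ) • M i)
        (fun i => psd_smul_real (hMpsd i) (by have := abs_le.mp (hsle i); linarith))
        (by
          have e : ∀ i ∈ Finset.univ, ((1 + s i : ℝ) : ℂ) • M i = M i + ((s i : ℝ) : ℂ) • M i := by
            intro i _
            have : ((1 + s i : ℝ) : ℂ) = 1 + ((s i : ℝ) : ℂ) := by push_cast; ring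
            rw [this, add_smul, one_smul]
          rw [Finset.sum_congr rfl e, Finset.sum_add_distrib, hMsum, hsum0, add_zero])
        (fun i => psd_smul_real (hMpsd i) (by have := abs_le.mp (hsle i); linarith))
        (by
          have e : ∀ i ∈ Finset.univ, ((1 - s i : ℝ) : ℂ) • M i = M i - ((s i : ℝ) : ℂ) • M i := by
            intro i _
            have : ((1 - s i : ℝ) : ℂ) = 1 - ((s i : ℝ) : ℂ) := by push_cast; ring
            rw [this, sub_smul, one_smul]
          rw [Finset.sum_congr rfl e, Finset.sum_sub_distrib, hMsum, hsum0, sub_zero])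
        (by
          funext i
          simp only [Pi.add_apply, Pi.smul_apply, smul_smul]
          nth_rewrite 1 [← one_smul ℂ (M i)]
          rw [← add_smul]
          congr 1
          push_cast
          ring)
    have h3 := congrFun h1' i0
    have h4 : ((s i0 : ℝ) : ℂ) • M i0 = 0 := by
      have e : ((1 + s i0 : ℝ) : ℂ) = 1 + ((s i0 : ℝ) : ℂ) := by push_cast; ring
      rw [e, add_smul, one_smul] at h3
      calc ((s i0 : ℝ) : ℂ) • M i0
          = M i0 + ((s i0 : ℝ) : ℂ) • M i0 - M i0 := by abel
        _ = 0 := by rw [h3]; simp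
    rcases smul_eq_zero.mp h4 with h | h
    · have : s i0 = 0 := by exact_mod_cast h
      rw [hs] at this
      exact ht0 (by field_simp at this; simpa using this)
    · exact hMne i0 h
  · -- linearly independent → extreme
    intro hLI M' M'' hP' hS' hP'' hS'' hcomb
    have hcomb' : ∀ i, M' i + M'' i = (2:ℂ) • M i := by
      intro i
      have h := congrFun hcomb i
      simp only [Pi.add_apply, Pi.smul_apply] at h
      rw [h, smul_add, smul_smul, smul_smul]
      norm_num
    have ht : ∀ i, ∃ c : ℂ, M' i = c • M i := by
      intro i
      have h := key (v i) (hv i) (M' i) (M'' i) (hP' i) (hP'' i)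
        (by rw [← hrank1 i]; exact hcomb' i)
      rwa [← hrank1 i] at h
    choose c hc using ht
    have hrel : ∑ i, (c i - 1) • M i = 0 := by
      simp only [sub_smul, one_smul, Finset.sum_sub_distrib]
      have e1 : ∑ i, c i • M i = 1 := by
        rw [← hS']
        exact Finset.sum_congr rfl fun i _ => (hc i).symm
      rw [e1, hMsum, sub_self]
    have hone : ∀ i, c i - 1 = 0 := Fintype.linearIndependent_iff.mp hLI _ hrel
    have hM' : M' = M := by
      funext i
      rw [hc i, sub_eq_zero.mp (hone i), one_smul]
    refine ⟨hM', ?_⟩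
    funext i
    have h := hcomb' i
    rw [congrFun hM' i, two_smul] at h
    exact add_left_cancel h
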